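/- Let (G,Λ) be a pseudo free self-similar k-graph such that g·v = v for all g ∈ G and v ∈ Λ^0, and let T be a maximal tail of Λ. Then H_T ΛT := {μ ∈ ΛT : r(μ) ∈ H_T} is a row-finite source-free k-graph with vertex set H_T, the action of G and the restriction map restrict to it, and (G, H_T ΛT) is a pseudo free self-similar k-graph. -/
import Mathlib


/-- A `k`-graph: a countable small category equipped with a degree functor
`d : Λ → ℕ^k` satisfying the unique factorization property.  Objects are
identified with their identity morphisms (the degree-zero paths);
`comp μ ν` is the composite `μν` (a junk value when `s μ ≠ r ν`). -/
structure KGraph (k : ℕ) where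
  Path : Type
  countable : Countable Path
  r : Path → Path
  s : Path → Path
  d : Path → Fin k → ℕ
  comp : Path → Path → Path
  d_r : ∀ μ, d (r μ) = 0
  d_s : ∀ μ, d (s μ) = 0
  r_r : ∀ μ, r (r μ) = r μ
  s_r : ∀ μ, s (r μ) = r μ
  r_s : ∀ μ, r (s μ) = s μ
  s_s : ∀ μ, s (s μ) = s μ
  eq_r_of_d_eq_zero : ∀ μ, d μ = 0 → μ = r μ
  comp_id : ∀ μ, comp μ (s μ) = μ
  id_comp : ∀ μ, comp (r μ) μ = μ
  r_comp : ∀ μ ν, s μ = r ν → r (comp μ ν) = r μ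
  s_comp : ∀ μ ν, s μ = r ν → s (comp μ ν) = s ν
  d_comp : ∀ μ ν, s μ = r ν → d (comp μ ν) = d μ + d ν
  comp_assoc : ∀ μ ν ξ, s μ = r ν → s ν = r ξ →
    comp (comp μ ν) ξ = comp μ (comp ν ξ)
  factor : ∀ μ p q, d μ = p + q →
    ∃! αβ : Path × Path, s αβ.1 = r αβ.2 ∧ d αβ.1 = p ∧ d αβ.2 = q ∧
      comp αβ.1 αβ.2 = μ

namespace KGraph

variable {k : ℕ} (Λ : KGraph k)

/-- The vertices of a `k`-graph are the degree-zero paths. -/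
def IsVertex (v : Λ.Path) : Prop := Λ.d v = 0

/-- `Λ` is row-finite if `|v Λ^p| < ∞` for every vertex `v` and `p ∈ ℕ^k`. -/
def RowFinite : Prop :=
  ∀ v, Λ.IsVertex v → ∀ p : Fin k → ℕ, {μ | Λ.r μ = v ∧ Λ.d μ = p}.Finite

/-- `Λ` is source-free if `v Λ^p ≠ ∅` for every vertex `v` and `p ∈ ℕ^k`. -/
def SourceFree : Prop :=
  ∀ v, Λ.IsVertex v → ∀ p : Fin k → ℕ, ∃ μ, Λ.r μ = v ∧ Λ.d μ = p

/-- `ΛT`, the set of paths of `Λ` whose source lies in `T`. -/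
def tailPaths (T : Set Λ.Path) : Set Λ.Path := {μ | Λ.s μ ∈ T}

/-- `H Λ T`, the set of paths with source in `T` and range in `H`. -/
def cornerPaths (T H : Set Λ.Path) : Set Λ.Path := {μ | Λ.s μ ∈ T ∧ Λ.r μ ∈ H}

end KGraph

/-- A maximal tail of a `k`-graph. -/
structure MaximalTail {k : ℕ} (Λ : KGraph k) (T : Set Λ.Path) : Prop where
  nonempty : T.Nonempty
  vertex : ∀ v ∈ T, Λ.IsVertex v
  backward_closed : ∀ w, Λ.IsVertex w → ∀ v ∈ T, (∃ μ, Λ.r μ = w ∧ Λ.s μ = v) → w ∈ T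
  reaches : ∀ v ∈ T, ∀ p : Fin k → ℕ, ∃ μ, Λ.r μ = v ∧ Λ.d μ = p ∧ Λ.s μ ∈ T
  directed : ∀ v₁ ∈ T, ∀ v₂ ∈ T, ∃ w ∈ T,
    (∃ μ, Λ.r μ = v₁ ∧ Λ.s μ = w) ∧ (∃ ν, Λ.r ν = v₂ ∧ Λ.s ν = w)

/-- An infinite path of a `k`-graph, i.e. a degree-preserving functor
`x : Ω_k → Λ`; here `val p n` records the segment `x(p, p + n)`. -/
structure InfPath {k : ℕ} (Λ : KGraph k) where
  val : (Fin k → ℕ) → (Fin k → ℕ) → Λ.Path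
  d_val : ∀ p n, Λ.d (val p n) = n
  r_val : ∀ p n, Λ.r (val p n) = val p 0
  s_val : ∀ p n, Λ.s (val p n) = val (p + n) 0
  comp_val : ∀ p m n, Λ.comp (val p m) (val (p + m) n) = val p (m + n)

namespace InfPath

variable {k : ℕ} {Λ : KGraph k}

/-- The shift `σ^n x` of an infinite path. -/
def shift (x : InfPath Λ) (n : Fin k → ℕ) : InfPath Λ where
  val p m := x.val (p + n) m
  d_val p m := x.d_val _ _
  r_val p m := x.r_val _ _
  s_val p m := by rw [x.s_val, add_right_comm]
  comp_val p m m' := by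
    show Λ.comp (x.val (p + n) m) (x.val (p + m + n) m') = x.val (p + n) (m + m')
    rw [add_right_comm p m n]; exact x.comp_val (p + n) m m'

/-- An infinite path lies in the subgraph determined by the set of paths `P`
if all of its segments lie in `P`. -/
def inSub (P : Set Λ.Path) (x : InfPath Λ) : Prop := ∀ p n, x.val p n ∈ P

end InfPath

/-- `z = μ x`: `z` is the infinite path obtained by prepending the finite
path `μ` to the infinite path `x` (which requires `s μ = x(0,0)`). -/
def KGraph.IsExtension {k : ℕ} (Λ : KGraph k) (μ : Λ.Path) (x z : InfPath Λ) : Prop :=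
  Λ.s μ = x.val 0 0 ∧ ∀ n, z.val 0 (Λ.d μ + n) = Λ.comp μ (x.val 0 n)

/-- A cycline pair `(μ, 1, ν)` of the subgraph of `Λ` determined by the set of
paths `P`: `s μ = s ν` and `μ x = ν x` for every infinite path `x` of the
subgraph with range `s ν`. -/
def KGraph.IsCyclinePair {k : ℕ} (Λ : KGraph k) (P : Set Λ.Path) (μ ν : Λ.Path) : Prop :=
  μ ∈ P ∧ ν ∈ P ∧ Λ.s μ = Λ.s ν ∧
    ∀ x : InfPath Λ, x.inSub P →
      ∀ z : InfPath Λ, Λ.IsExtension ν x z → Λ.IsExtension μ x z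

/-- `Per_Γ` for the subgraph `Γ` of `Λ` determined by `P`:
the set of all `d μ − d ν` over cycline pairs `(μ, 1, ν)`. -/
def KGraph.PerPair {k : ℕ} (Λ : KGraph k) (P : Set Λ.Path) : Set (Fin k → ℤ) :=
  {m | ∃ μ ν, Λ.IsCyclinePair P μ ν ∧ m = fun i => (Λ.d μ i : ℤ) - (Λ.d ν i : ℤ)}

/-- A self-similar `k`-graph `(G, Λ)`: an action of the countable discrete
group `G` on `Λ` together with a restriction map `(g, μ) ↦ g|_μ`. -/
structure SelfSimilarSys (k : ℕ) (G : Type) [Group G] [Countable G] (Λ : KGraph k) where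
  act : G → Λ.Path → Λ.Path
  res : G → Λ.Path → G
  act_one : ∀ μ, act 1 μ = μ
  act_mul : ∀ g h μ, act (g * h) μ = act g (act h μ)
  d_act : ∀ g μ, Λ.d (act g μ) = Λ.d μ
  s_act : ∀ g μ, Λ.s (act g μ) = act g (Λ.s μ)
  r_act : ∀ g μ, Λ.r (act g μ) = act g (Λ.r μ)
  act_comp : ∀ g μ ν, Λ.s μ = Λ.r ν →
    act g (Λ.comp μ ν) = Λ.comp (act g μ) (act (res g μ) ν)
  res_vertex : ∀ g v, Λ.IsVertex v → res g v = g
  res_comp : ∀ g μ ν, Λ.s μ = Λ.r ν → res g (Λ.comp μ ν) = res (res g μ) ν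
  res_one : ∀ μ, res 1 μ = 1
  res_mul : ∀ g h μ, res (g * h) μ = res g (act h μ) * res h μ

namespace SelfSimilarSys

variable {k : ℕ} {G : Type} [Group G] [Countable G] {Λ : KGraph k}

/-- `(G, Λ)` is pseudo free: `g·μ = μ` and `g|_μ = 1` imply `g = 1`. -/
def PseudoFree (S : SelfSimilarSys k G Λ) : Prop :=
  ∀ g μ, S.act g μ = μ → S.res g μ = 1 → g = 1

/-- `y = g · x` for infinite paths: `y(0, n) = g · x(0, n)` for all `n`. -/
def IsGAct (S : SelfSimilarSys k G Λ) (g : G) (x y : InfPath Λ) : Prop :=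
  ∀ n, y.val 0 n = S.act g (x.val 0 n)

/-- A cycline triple `(μ, g, ν)` of the subgraph of `Λ` determined by `P`:
`s μ = g · s ν` and `μ (g · x) = ν x` for every infinite path `x` of the
subgraph with range `s ν`. -/
def IsCyclineTriple (S : SelfSimilarSys k G Λ) (P : Set Λ.Path)
    (μ : Λ.Path) (g : G) (ν : Λ.Path) : Prop :=
  μ ∈ P ∧ ν ∈ P ∧ Λ.s μ = S.act g (Λ.s ν) ∧
    ∀ x : InfPath Λ, x.inSub P → Λ.s ν = x.val 0 0 →
      ∀ y : InfPath Λ, S.IsGAct g x y →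
        ∀ z : InfPath Λ, Λ.IsExtension ν x z → Λ.IsExtension μ y z

/-- `Per_{G,Γ}` for the subgraph `Γ` of `Λ` determined by `P`:
the set of all `d μ − d ν` over cycline triples `(μ, g, ν)`. -/
def PerTriple (S : SelfSimilarSys k G Λ) (P : Set Λ.Path) : Set (Fin k → ℤ) :=
  {m | ∃ μ g ν, S.IsCyclineTriple P μ g ν ∧ m = fun i => (Λ.d μ i : ℤ) - (Λ.d ν i : ℤ)}

/-- Membership `y ∈ [x]`: `y` is an infinite path of `ΛT` and
`σ^p x = g · σ^q y` for some `p, q ∈ ℕ^k` and `g ∈ G`. -/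
def ClassMem (S : SelfSimilarSys k G Λ) (T : Set Λ.Path) (x y : InfPath Λ) : Prop :=
  y.inSub (Λ.tailPaths T) ∧ ∃ p q : Fin k → ℕ, ∃ g : G, S.IsGAct g (y.shift q) (x.shift p)

end SelfSimilarSys

/-- `H_T`: the vertices `v ∈ T` such that for all `p, q ∈ ℕ^k` with
`p − q ∈ Per_{ΛT}` and every `μ ∈ v Λ^p T` there is a unique `ν ∈ v Λ^q T`
with `(μ, 1, ν)` a cycline pair of `ΛT`. -/
def KGraph.HSet {k : ℕ} (Λ : KGraph k) (T : Set Λ.Path) : Set Λ.Path :=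
  {v | v ∈ T ∧ ∀ p q : Fin k → ℕ,
    (fun i => (p i : ℤ) - (q i : ℤ)) ∈ Λ.PerPair (Λ.tailPaths T) →
      ∀ μ, Λ.r μ = v → Λ.d μ = p → Λ.s μ ∈ T →
        ∃! ν, Λ.r ν = v ∧ Λ.d ν = q ∧ Λ.IsCyclinePair (Λ.tailPaths T) μ ν}

namespace KGraph

variable {k : ℕ} (Λ : KGraph k)

theorem comp_factor_unique {μ ν μ' ν' : Λ.Path}
    (h1 : Λ.s μ = Λ.r ν) (h1' : Λ.s μ' = Λ.r ν')
    (hd : Λ.d μ = Λ.d μ') (h : Λ.comp μ ν = Λ.comp μ' ν') :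
    μ = μ' ∧ ν = ν' := by
  have hw : Λ.d (Λ.comp μ ν) = Λ.d μ + Λ.d ν := Λ.d_comp _ _ h1
  have hw' : Λ.d (Λ.comp μ ν) = Λ.d μ' + Λ.d ν' := by rw [h]; exact Λ.d_comp _ _ h1'
  have hd2 : Λ.d ν = Λ.d ν' := by
    have h3 := hw.symm.trans hw'
    rw [hd] at h3
    exact add_left_cancel h3
  obtain ⟨ab, _, huniq⟩ := Λ.factor (Λ.comp μ ν) (Λ.d μ) (Λ.d ν) hw
  have e1 := huniq (μ, ν) ⟨h1, rfl, rfl, rfl⟩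
  have e2 := huniq (μ', ν') ⟨h1', hd.symm, hd2.symm, h.symm⟩
  have e3 := e1.trans e2.symm
  exact ⟨congrArg Prod.fst e3, congrArg Prod.snd e3⟩

theorem vertex_r {v : Λ.Path} (h : Λ.IsVertex v) : Λ.r v = v :=
  (Λ.eq_r_of_d_eq_zero v h).symm

theorem vertex_s {v : Λ.Path} (h : Λ.IsVertex v) : Λ.s v = v := by
  have hr : v = Λ.r v := Λ.eq_r_of_d_eq_zero v h
  calc Λ.s v = Λ.s (Λ.r v) := by rw [← hr]
  _ = Λ.r v := Λ.s_r v
  _ = v := hr.symm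

theorem seg_exists (w : Λ.Path) (p n r : Fin k → ℕ) (h : Λ.d w = p + n + r) :
    ∃ x : Λ.Path × Λ.Path × Λ.Path,
      Λ.s x.1 = Λ.r x.2.1 ∧ Λ.s x.2.1 = Λ.r x.2.2 ∧
      Λ.d x.1 = p ∧ Λ.d x.2.1 = n ∧ Λ.d x.2.2 = r ∧
      Λ.comp x.1 (Λ.comp x.2.1 x.2.2) = w := by
  obtain ⟨⟨α, β⟩, ⟨hs1, hd1, hd2, hc1⟩, -⟩ := Λ.factor w p (n + r) (by rw [h, add_assoc])
  obtain ⟨⟨γ, δ⟩, ⟨hs2, hd3, hd4, hc2⟩, -⟩ := Λ.factor β n r hd2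
  refine ⟨(α, γ, δ), ?_, hs2, hd1, hd3, hd4, by rw [hc2, hc1]⟩
  rw [hs1, ← hc2, Λ.r_comp _ _ hs2]

noncomputable def seg (w : Λ.Path) (p n r : Fin k → ℕ) (h : Λ.d w = p + n + r) : Λ.Path :=
  (Λ.seg_exists w p n r h).choose.2.1

theorem seg_spec (w : Λ.Path) (p n r : Fin k → ℕ) (h : Λ.d w = p + n + r) :
    ∃ α δ : Λ.Path,
      Λ.s α = Λ.r (Λ.seg w p n r h) ∧ Λ.s (Λ.seg w p n r h) = Λ.r δ ∧
      Λ.d α = p ∧ Λ.d (Λ.seg w p n r h) = n ∧ Λ.d δ = r ∧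
      Λ.comp α (Λ.comp (Λ.seg w p n r h) δ) = w := by
  obtain ⟨h1, h2, h3, h4, h5, h6⟩ := (Λ.seg_exists w p n r h).choose_spec
  exact ⟨_, _, h1, h2, h3, h4, h5, h6⟩

theorem seg_unique {w : Λ.Path} {p n r : Fin k → ℕ} {h : Λ.d w = p + n + r}
    {α γ δ : Λ.Path} (hs1 : Λ.s α = Λ.r γ) (hs2 : Λ.s γ = Λ.r δ)
    (hd1 : Λ.d α = p) (hd2 : Λ.d γ = n) (hd3 : Λ.d δ = r)
    (hc : Λ.comp α (Λ.comp γ δ) = w) : Λ.seg w p n r h = γ := by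
  obtain ⟨α', δ', hs1', hs2', hd1', hd2', hd3', hc'⟩ := Λ.seg_spec w p n r h
  have hmain : Λ.comp α (Λ.comp γ δ) = Λ.comp α' (Λ.comp (Λ.seg w p n r h) δ') := by
    rw [hc, hc']
  have hfst := Λ.comp_factor_unique
    (by rw [hs1, (Λ.r_comp γ δ hs2).symm]) (by rw [hs1', (Λ.r_comp _ δ' hs2').symm])
    (hd1.trans hd1'.symm) hmain
  have hsnd := Λ.comp_factor_unique hs2 hs2' (hd2.trans hd2'.symm) hfst.2
  exact hsnd.1.symm

theorem seg_d (w : Λ.Path) (p n r : Fin k → ℕ) (h : Λ.d w = p + n + r) :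
    Λ.d (Λ.seg w p n r h) = n := by
  obtain ⟨-, -, -, -, -, h4, -, -⟩ := Λ.seg_spec w p n r h
  exact h4

theorem seg_irrel (w : Λ.Path) (p n r r' : Fin k → ℕ)
    (h : Λ.d w = p + n + r) (h' : Λ.d w = p + n + r') :
    Λ.seg w p n r h = Λ.seg w p n r' h' := by
  have : r = r' := add_left_cancel (h.symm.trans h')
  subst this; rfl

theorem seg_congr {w w' : Λ.Path} (hw : w = w') {p n r r' : Fin k → ℕ}
    (h : Λ.d w = p + n + r) (h' : Λ.d w' = p + n + r') :
    Λ.seg w p n r h = Λ.seg w' p n r' h' := by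
  subst hw; exact Λ.seg_irrel w p n r r' h h'

theorem seg_r (w : Λ.Path) (p n r : Fin k → ℕ) (h : Λ.d w = p + n + r)
    (h' : Λ.d w = p + 0 + (n + r)) :
    Λ.r (Λ.seg w p n r h) = Λ.seg w p 0 (n + r) h' := by
  obtain ⟨α, δ, hs1, hs2, hd1, hd2, hd3, hc⟩ := Λ.seg_spec w p n r h
  set γ := Λ.seg w p n r h with hγ
  refine (Λ.seg_unique (α := α) (γ := Λ.r γ) (δ := Λ.comp γ δ) ?_ ?_ hd1 (Λ.d_r γ) ?_ ?_).symm
  · rw [hs1, Λ.r_r]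
  · rw [Λ.s_r, Λ.r_comp γ δ hs2]
  · rw [Λ.d_comp γ δ hs2, hd2, hd3]
  · rw [show Λ.comp (Λ.r γ) (Λ.comp γ δ) = Λ.comp γ δ by
      rw [← Λ.r_comp γ δ hs2, Λ.id_comp], hc]

theorem seg_s (w : Λ.Path) (p n r : Fin k → ℕ) (h : Λ.d w = p + n + r)
    (h' : Λ.d w = (p + n) + 0 + r) :
    Λ.s (Λ.seg w p n r h) = Λ.seg w (p + n) 0 r h' := by
  obtain ⟨α, δ, hs1, hs2, hd1, hd2, hd3, hc⟩ := Λ.seg_spec w p n r h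
  set γ := Λ.seg w p n r h with hγ
  refine (Λ.seg_unique (α := Λ.comp α γ) (γ := Λ.s γ) (δ := δ) ?_ ?_ ?_ (Λ.d_s γ) hd3 ?_).symm
  · rw [Λ.s_comp α γ hs1, Λ.r_s]
  · rw [Λ.s_s, hs2]
  · rw [Λ.d_comp α γ hs1, hd1, hd2]
  · rw [show Λ.comp (Λ.s γ) δ = δ by rw [hs2, Λ.id_comp],
      Λ.comp_assoc α γ δ hs1 hs2, hc]

theorem seg_zero (w : Λ.Path) (r : Fin k → ℕ) (h : Λ.d w = 0 + 0 + r) :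
    Λ.seg w 0 0 r h = Λ.r w := by
  refine Λ.seg_unique (α := Λ.r w) (γ := Λ.r w) (δ := w) ?_ ?_ (Λ.d_r w) (Λ.d_r w) ?_ ?_
  · rw [Λ.s_r, Λ.r_r]
  · rw [Λ.s_r]
  · simpa using h
  · rw [Λ.id_comp, Λ.id_comp]

theorem seg_comp_right (w δ' : Λ.Path) (p n r : Fin k → ℕ) (h : Λ.d w = p + n + r)
    (hδ : Λ.s w = Λ.r δ') (h2 : Λ.d (Λ.comp w δ') = p + n + (r + Λ.d δ')) :
    Λ.seg (Λ.comp w δ') p n (r + Λ.d δ') h2 = Λ.seg w p n r h := by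
  obtain ⟨α, δ, hs1, hs2, hd1, hd2, hd3, hc⟩ := Λ.seg_spec w p n r h
  set γ := Λ.seg w p n r h with hγ
  have hsα : Λ.s α = Λ.r (Λ.comp γ δ) := by rw [hs1, Λ.r_comp γ δ hs2]
  have hsδ₀ : Λ.s δ = Λ.r δ' := by
    have e1 : Λ.s w = Λ.s δ := by
      rw [← hc, Λ.s_comp α _ hsα, Λ.s_comp γ δ hs2]
    rw [← e1, hδ]
  refine Λ.seg_unique (α := α) (γ := γ) (δ := Λ.comp δ δ') hs1 ?_ hd1 hd2 ?_ ?_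
  · rw [hs2, Λ.r_comp δ δ' hsδ₀]
  · rw [Λ.d_comp δ δ' hsδ₀, hd3]
  · have hs3 : Λ.s (Λ.comp γ δ) = Λ.r δ' := by rw [Λ.s_comp γ δ hs2]; exact hsδ₀
    rw [← Λ.comp_assoc γ δ δ' hs2 hsδ₀, ← Λ.comp_assoc α (Λ.comp γ δ) δ' hsα hs3, hc]

end KGraph
namespace KGraph

variable {k : ℕ} (Λ : KGraph k)

theorem seg_add (w : Λ.Path) (p m n r : Fin k → ℕ)
    (h1 : Λ.d w = p + m + (n + r)) (h2 : Λ.d w = (p + m) + n + r)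
    (h3 : Λ.d w = p + (m + n) + r) :
    Λ.comp (Λ.seg w p m (n + r) h1) (Λ.seg w (p + m) n r h2) = Λ.seg w p (m + n) r h3 := by
  obtain ⟨α, δ, hs1, hs2, hd1, hd2, hd3, hc⟩ := Λ.seg_spec w p (m + n) r h3
  set γ := Λ.seg w p (m + n) r h3 with hγ
  obtain ⟨⟨γ₁, γ₂⟩, ⟨hgs, hgd1, hgd2, hgc⟩, -⟩ := Λ.factor γ m n hd2
  have hsγ₂δ : Λ.s γ₂ = Λ.r δ := by
    rw [show Λ.s γ₂ = Λ.s γ by rw [← hgc, Λ.s_comp γ₁ γ₂ hgs], hs2]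
  have hrγ : Λ.r γ = Λ.r γ₁ := by rw [← hgc, Λ.r_comp γ₁ γ₂ hgs]
  have e1 : Λ.seg w p m (n + r) h1 = γ₁ := by
    refine Λ.seg_unique (α := α) (δ := Λ.comp γ₂ δ) ?_ ?_ hd1 hgd1 ?_ ?_
    · rw [hs1, hrγ]
    · rw [hgs, Λ.r_comp γ₂ δ hsγ₂δ]
    · rw [Λ.d_comp γ₂ δ hsγ₂δ, hgd2, hd3]
    · rw [← Λ.comp_assoc γ₁ γ₂ δ hgs hsγ₂δ, hgc, hc]
  have e2 : Λ.seg w (p + m) n r h2 = γ₂ := by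
    have hsαγ₁ : Λ.s α = Λ.r γ₁ := by rw [hs1, hrγ]
    refine Λ.seg_unique (α := Λ.comp α γ₁) (δ := δ) ?_ hsγ₂δ ?_ hgd2 hd3 ?_
    · rw [Λ.s_comp α γ₁ hsαγ₁, hgs]
    · rw [Λ.d_comp α γ₁ hsαγ₁, hd1, hgd1]
    · rw [Λ.comp_assoc α γ₁ (Λ.comp γ₂ δ) hsαγ₁
        (by rw [hgs, Λ.r_comp γ₂ δ hsγ₂δ]),
        ← Λ.comp_assoc γ₁ γ₂ δ hgs hsγ₂δ, hgc, hc]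
  rw [e1, e2, hgc]

theorem chain_deg {w : ℕ → Λ.Path} (hd : ∀ m i, m ≤ Λ.d (w m) i)
    (p n : Fin k → ℕ) {N : ℕ} (hN : ∀ i, p i + n i ≤ N) :
    Λ.d (w N) = p + n + fun i => Λ.d (w N) i - (p i + n i) := by
  funext i
  have h1 := hd N i
  have h2 := hN i
  simp only [Pi.add_apply]
  omega

theorem sum_bound (p n : Fin k → ℕ) (i : Fin k) : p i + n i ≤ ∑ j, (p j + n j) :=
  Finset.single_le_sum (f := fun j => p j + n j) (fun j _ => Nat.zero_le _) (Finset.mem_univ i)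

theorem chain_stable {w : ℕ → Λ.Path} (hd : ∀ m i, m ≤ Λ.d (w m) i)
    (hcomp : ∀ a b, ∃ δ, Λ.s (w a) = Λ.r δ ∧ w (a + b) = Λ.comp (w a) δ)
    (p n : Fin k → ℕ) {N N' : ℕ} (hle : N ≤ N') (r r' : Fin k → ℕ)
    (h : Λ.d (w N) = p + n + r) (h' : Λ.d (w N') = p + n + r') :
    Λ.seg (w N') p n r' h' = Λ.seg (w N) p n r h := by
  obtain ⟨δ, hsδ, he⟩ := hcomp N (N' - N)
  rw [Nat.add_sub_cancel' hle] at he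
  have h'' : Λ.d (Λ.comp (w N) δ) = p + n + (r + Λ.d δ) := by
    rw [Λ.d_comp _ _ hsδ, h, add_assoc]
  exact (Λ.seg_congr he h' h'').trans (Λ.seg_comp_right (w N) δ p n r h hsδ h'')

/-- The segment from `p` to `p + n` of the "limit" of the chain `w`. -/
noncomputable def chainVal {w : ℕ → Λ.Path} (hd : ∀ m i, m ≤ Λ.d (w m) i)
    (p n : Fin k → ℕ) : Λ.Path :=
  Λ.seg (w (∑ j, (p j + n j))) p n
    (fun i => Λ.d (w (∑ j, (p j + n j))) i - (p i + n i))
    (Λ.chain_deg hd p n (sum_bound p n))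

theorem chainVal_eq_seg {w : ℕ → Λ.Path} (hd : ∀ m i, m ≤ Λ.d (w m) i)
    (hcomp : ∀ a b, ∃ δ, Λ.s (w a) = Λ.r δ ∧ w (a + b) = Λ.comp (w a) δ)
    (p n : Fin k → ℕ) {N : ℕ} (hN : ∀ i, p i + n i ≤ N) (r : Fin k → ℕ)
    (h : Λ.d (w N) = p + n + r) :
    Λ.chainVal hd p n = Λ.seg (w N) p n r h := by
  unfold chainVal
  rcases le_total N (∑ j, (p j + n j)) with hle | hle
  · exact Λ.chain_stable hd hcomp p n hle r _ h _
  · exact (Λ.chain_stable hd hcomp p n hle _ r _ h).symm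

/-- The infinite path determined by a chain of finite paths. -/
noncomputable def ofChain (w : ℕ → Λ.Path) (hd : ∀ m i, m ≤ Λ.d (w m) i)
    (hcomp : ∀ a b, ∃ δ, Λ.s (w a) = Λ.r δ ∧ w (a + b) = Λ.comp (w a) δ) :
    InfPath Λ where
  val p n := Λ.chainVal hd p n
  d_val p n := by
    show Λ.d (Λ.chainVal hd p n) = n
    rw [Λ.chainVal_eq_seg hd hcomp p n (sum_bound p n) _ (Λ.chain_deg hd p n (sum_bound p n))]
    exact Λ.seg_d _ _ _ _ _
  r_val p n := by
    show Λ.r (Λ.chainVal hd p n) = Λ.chainVal hd p 0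
    set N := ∑ j, (p j + n j) with hNdef
    have hN : ∀ i, p i + n i ≤ N := sum_bound p n
    have hN0 : ∀ i, p i + (0 : Fin k → ℕ) i ≤ N := by
      intro i; have := hN i; simp only [Pi.zero_apply]; omega
    have h1 : Λ.d (w N) = p + n + fun i => Λ.d (w N) i - (p i + n i) :=
      Λ.chain_deg hd p n hN
    have h2 : Λ.d (w N) = p + 0 + (n + fun i => Λ.d (w N) i - (p i + n i)) := by
      funext i
      have ha := hd N i; have hb := hN i
      simp only [Pi.add_apply, Pi.zero_apply]
      omega
    rw [Λ.chainVal_eq_seg hd hcomp p n hN _ h1,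
      Λ.chainVal_eq_seg hd hcomp p 0 hN0 _ h2]
    exact Λ.seg_r (w N) p n _ h1 h2
  s_val p n := by
    show Λ.s (Λ.chainVal hd p n) = Λ.chainVal hd (p + n) 0
    set N := ∑ j, (p j + n j) with hNdef
    have hN : ∀ i, p i + n i ≤ N := sum_bound p n
    have hN' : ∀ i, (p + n) i + (0 : Fin k → ℕ) i ≤ N := by
      intro i; have := hN i; simp only [Pi.add_apply, Pi.zero_apply]; omega
    have h1 : Λ.d (w N) = p + n + fun i => Λ.d (w N) i - (p i + n i) :=
      Λ.chain_deg hd p n hN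
    have h2 : Λ.d (w N) = (p + n) + 0 + fun i => Λ.d (w N) i - (p i + n i) := by
      funext i
      have ha := hd N i; have hb := hN i
      simp only [Pi.add_apply, Pi.zero_apply]
      omega
    rw [Λ.chainVal_eq_seg hd hcomp p n hN _ h1,
      Λ.chainVal_eq_seg hd hcomp (p + n) 0 hN' _ h2]
    exact Λ.seg_s (w N) p n _ h1 h2
  comp_val p m n := by
    show Λ.comp (Λ.chainVal hd p m) (Λ.chainVal hd (p + m) n) = Λ.chainVal hd p (m + n)
    set N := ∑ j, (p j + (m + n) j) with hNdef
    have hN3 : ∀ i, p i + (m + n) i ≤ N := sum_bound p (m + n)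
    have hN1 : ∀ i, p i + m i ≤ N := by
      intro i; have := hN3 i; simp only [Pi.add_apply] at this; omega
    have hN2 : ∀ i, (p + m) i + n i ≤ N := by
      intro i; have := hN3 i; simp only [Pi.add_apply] at this ⊢; omega
    have h3 : Λ.d (w N) = p + (m + n) + fun i => Λ.d (w N) i - (p i + (m + n) i) :=
      Λ.chain_deg hd p (m + n) hN3
    have h1 : Λ.d (w N) = p + m + (n + fun i => Λ.d (w N) i - (p i + (m + n) i)) := by
      funext i
      have ha := hd N i; have hb := hN3 i
      simp only [Pi.add_apply] at hb ⊢
      omega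
    have h2 : Λ.d (w N) = (p + m) + n + fun i => Λ.d (w N) i - (p i + (m + n) i) := by
      funext i
      have ha := hd N i; have hb := hN3 i
      simp only [Pi.add_apply] at hb ⊢
      omega
    rw [Λ.chainVal_eq_seg hd hcomp p m hN1 _ h1,
      Λ.chainVal_eq_seg hd hcomp (p + m) n hN2 _ h2,
      Λ.chainVal_eq_seg hd hcomp p (m + n) hN3 _ h3]
    exact Λ.seg_add (w N) p m n _ h1 h2 h3

theorem ofChain_val (w : ℕ → Λ.Path) (hd : ∀ m i, m ≤ Λ.d (w m) i)
    (hcomp : ∀ a b, ∃ δ, Λ.s (w a) = Λ.r δ ∧ w (a + b) = Λ.comp (w a) δ)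
    (p n : Fin k → ℕ) {N : ℕ} (hN : ∀ i, p i + n i ≤ N) (r : Fin k → ℕ)
    (h : Λ.d (w N) = p + n + r) :
    (Λ.ofChain w hd hcomp).val p n = Λ.seg (w N) p n r h :=
  Λ.chainVal_eq_seg hd hcomp p n hN r h

end KGraph
namespace KGraph

variable {k : ℕ} (Λ : KGraph k)

theorem prepend_hd (α : Λ.Path) (x : InfPath Λ) (hs : Λ.s α = x.val 0 0) :
    ∀ m i, m ≤ Λ.d (Λ.comp α (x.val 0 (fun _ => m))) i := by
  intro m i
  have hsr : Λ.s α = Λ.r (x.val 0 (fun _ => m)) := by rw [x.r_val]; exact hs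
  have h1 := congrFun (Λ.d_comp α _ hsr) i
  have h2 := congrFun (x.d_val 0 (fun _ => m)) i
  rw [h1]
  simp only [Pi.add_apply, h2]
  omega

theorem prepend_hcomp (α : Λ.Path) (x : InfPath Λ) (hs : Λ.s α = x.val 0 0) :
    ∀ a b, ∃ δ, Λ.s (Λ.comp α (x.val 0 (fun _ => a))) = Λ.r δ ∧
      Λ.comp α (x.val 0 (fun _ => (a + b))) = Λ.comp (Λ.comp α (x.val 0 (fun _ => a))) δ := by
  intro a b
  have hsa : Λ.s α = Λ.r (x.val 0 (fun _ => a)) := by rw [x.r_val]; exact hs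
  refine ⟨x.val (fun _ => a) (fun _ => b), ?_, ?_⟩
  · rw [Λ.s_comp α _ hsa, x.s_val, x.r_val, zero_add]
  · have hcv := x.comp_val 0 (fun _ => a) (fun _ => b)
    rw [zero_add] at hcv
    have he : (fun _ : Fin k => a + b) = (fun _ : Fin k => a) + (fun _ : Fin k => b) := rfl
    rw [he, ← hcv, ← Λ.comp_assoc α _ _ hsa (by rw [x.s_val, x.r_val, zero_add])]

/-- Prepend a finite path to an infinite path. -/
noncomputable def prepend (α : Λ.Path) (x : InfPath Λ) (hs : Λ.s α = x.val 0 0) :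
    InfPath Λ :=
  Λ.ofChain (fun m => Λ.comp α (x.val 0 (fun _ => m)))
    (Λ.prepend_hd α x hs) (Λ.prepend_hcomp α x hs)

theorem prepend_val (α : Λ.Path) (x : InfPath Λ) (hs : Λ.s α = x.val 0 0)
    (p n : Fin k → ℕ) {N : ℕ} (hN : ∀ i, p i + n i ≤ N) (r : Fin k → ℕ)
    (h : Λ.d (Λ.comp α (x.val 0 (fun _ => N))) = p + n + r) :
    (Λ.prepend α x hs).val p n = Λ.seg (Λ.comp α (x.val 0 (fun _ => N))) p n r h :=
  Λ.ofChain_val _ (Λ.prepend_hd α x hs) (Λ.prepend_hcomp α x hs) p n hN r h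

theorem prepend_spec (α : Λ.Path) (x : InfPath Λ) (hs : Λ.s α = x.val 0 0) :
    Λ.IsExtension α x (Λ.prepend α x hs) := by
  refine ⟨hs, fun n => ?_⟩
  set N := ∑ j, (Λ.d α j + n j) with hNdef
  have hni : ∀ i, n i ≤ N := by
    intro i; have := sum_bound (Λ.d α) n i; omega
  have hαi : ∀ i, Λ.d α i + n i ≤ N := sum_bound (Λ.d α) n
  have hbound : ∀ i, (0 : Fin k → ℕ) i + (Λ.d α + n) i ≤ N := by
    intro i
    simp only [Pi.zero_apply, Pi.add_apply]
    have := hαi i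
    omega
  have hsrN : Λ.s α = Λ.r (x.val 0 (fun _ => N)) := by rw [x.r_val]; exact hs
  set w : Λ.Path := Λ.comp α (x.val 0 (fun _ => N)) with hw
  have hdeg : Λ.d w = 0 + (Λ.d α + n) + fun i => N - n i := by
    funext i
    have h1 := congrFun (Λ.d_comp α _ hsrN) i
    have h2 := congrFun (x.d_val 0 (fun _ => N)) i
    simp only [hw, Pi.add_apply, Pi.zero_apply, h1, h2]
    have := hni i
    omega
  rw [Λ.prepend_val α x hs 0 (Λ.d α + n) hbound _ hdeg]
  -- now show the segment is comp α (x.val 0 n)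
  have hsn : Λ.s α = Λ.r (x.val 0 n) := by rw [x.r_val]; exact hs
  have hsplit : x.val 0 (fun _ => N) = Λ.comp (x.val 0 n) (x.val n (fun i => N - n i)) := by
    have hcv := x.comp_val 0 n (fun i => N - n i)
    rw [zero_add] at hcv
    rw [hcv]
    congr 1
    funext i
    simp only [Pi.add_apply]
    have := hni i
    omega
  have hrw : Λ.r w = Λ.r α := Λ.r_comp α _ hsrN
  have hs2 : Λ.s (x.val 0 n) = Λ.r (x.val n (fun i => N - n i)) := by
    rw [x.s_val, x.r_val, zero_add]
  refine Λ.seg_unique (α := Λ.r w) (γ := Λ.comp α (x.val 0 n))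
    (δ := x.val n (fun i => N - n i)) ?_ ?_ (Λ.d_r w) ?_ (x.d_val _ _) ?_
  · rw [Λ.s_r, hrw, Λ.r_comp α _ hsn]
  · rw [Λ.s_comp α _ hsn, x.s_val, x.r_val, zero_add]
  · rw [Λ.d_comp α _ hsn, x.d_val]
  · rw [Λ.comp_assoc α _ _ hsn hs2, ← hsplit, ← hw, Λ.id_comp]

end KGraph
namespace KGraph

variable {k : ℕ} (Λ : KGraph k)

/-- A chain of finite paths of `ΛT` with range `v₀`, of ever growing degree. -/
noncomputable def tailChain {T : Set Λ.Path} (hT : MaximalTail Λ T)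
    (v₀ : Λ.Path) (hv : v₀ ∈ T) : ℕ → {μ : Λ.Path // Λ.s μ ∈ T ∧ Λ.r μ = v₀} 
  | 0 => ⟨v₀, by rw [Λ.vertex_s (hT.vertex v₀ hv)]; exact hv,
      Λ.vertex_r (hT.vertex v₀ hv)⟩
  | m + 1 =>
    ⟨Λ.comp (tailChain hT v₀ hv m).1
        (hT.reaches _ (tailChain hT v₀ hv m).2.1 1).choose,
      by
        have hspec := (hT.reaches _ (tailChain hT v₀ hv m).2.1 1).choose_spec
        rw [Λ.s_comp _ _ hspec.1.symm]
        exact hspec.2.2,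
      by
        have hspec := (hT.reaches _ (tailChain hT v₀ hv m).2.1 1).choose_spec
        rw [Λ.r_comp _ _ hspec.1.symm]
        exact (tailChain hT v₀ hv m).2.2⟩

theorem tailChain_zero {T : Set Λ.Path} (hT : MaximalTail Λ T)
    (v₀ : Λ.Path) (hv : v₀ ∈ T) : (Λ.tailChain hT v₀ hv 0).1 = v₀ := rfl

theorem tailChain_succ {T : Set Λ.Path} (hT : MaximalTail Λ T)
    (v₀ : Λ.Path) (hv : v₀ ∈ T) (m : ℕ) :
    (Λ.tailChain hT v₀ hv (m + 1)).1 = Λ.comp (Λ.tailChain hT v₀ hv m).1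
      (hT.reaches _ (Λ.tailChain hT v₀ hv m).2.1 1).choose := rfl

theorem tailChain_d {T : Set Λ.Path} (hT : MaximalTail Λ T)
    (v₀ : Λ.Path) (hv : v₀ ∈ T) :
    ∀ m, Λ.d (Λ.tailChain hT v₀ hv m).1 = fun _ => m := by
  intro m
  induction m with
  | zero => rw [Λ.tailChain_zero hT v₀ hv]; exact hT.vertex v₀ hv
  | succ m ih =>
    rw [Λ.tailChain_succ hT v₀ hv m]
    have hspec := (hT.reaches _ (Λ.tailChain hT v₀ hv m).2.1 1).choose_spec
    rw [Λ.d_comp _ _ hspec.1.symm, ih, hspec.2.1]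
    funext i
    simp [Pi.add_apply]

theorem tailChain_comp {T : Set Λ.Path} (hT : MaximalTail Λ T)
    (v₀ : Λ.Path) (hv : v₀ ∈ T) :
    ∀ a b, ∃ δ, Λ.s (Λ.tailChain hT v₀ hv a).1 = Λ.r δ ∧
      (Λ.tailChain hT v₀ hv (a + b)).1 = Λ.comp (Λ.tailChain hT v₀ hv a).1 δ := by
  intro a b
  induction b with
  | zero =>
    exact ⟨Λ.s (Λ.tailChain hT v₀ hv a).1, (Λ.r_s _).symm, (Λ.comp_id _).symm⟩
  | succ b ih =>
    obtain ⟨δ, h1, h2⟩ := ih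
    have hspec := (hT.reaches _ (Λ.tailChain hT v₀ hv (a + b)).2.1 1).choose_spec
    set μ' := (hT.reaches _ (Λ.tailChain hT v₀ hv (a + b)).2.1 1).choose with hμ'
    have hsδ : Λ.s δ = Λ.r μ' := by
      rw [hspec.1, h2, Λ.s_comp _ _ h1]
    refine ⟨Λ.comp δ μ', by rw [h1, Λ.r_comp δ μ' hsδ], ?_⟩
    have hstep : a + (b + 1) = (a + b) + 1 := rfl
    rw [hstep, Λ.tailChain_succ hT v₀ hv (a + b), ← hμ', h2,
      Λ.comp_assoc _ δ μ' h1 hsδ]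

theorem exists_infPath {T : Set Λ.Path} (hT : MaximalTail Λ T)
    (v₀ : Λ.Path) (hv : v₀ ∈ T) :
    ∃ x : InfPath Λ, x.inSub (Λ.tailPaths T) ∧ x.val 0 0 = v₀ := by
  set W : ℕ → Λ.Path := fun m => (Λ.tailChain hT v₀ hv m).1 with hW
  have hd : ∀ m i, m ≤ Λ.d (W m) i := by
    intro m i
    have := congrFun (Λ.tailChain_d hT v₀ hv m) i
    simp only [hW] at *
    omega
  have hcomp : ∀ a b, ∃ δ, Λ.s (W a) = Λ.r δ ∧ W (a + b) = Λ.comp (W a) δ :=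
    Λ.tailChain_comp hT v₀ hv
  refine ⟨Λ.ofChain W hd hcomp, ?_, ?_⟩
  · intro p n
    show Λ.s ((Λ.ofChain W hd hcomp).val p n) ∈ T
    set N := ∑ j, (p j + n j) with hNdef
    have hN : ∀ i, p i + n i ≤ N := sum_bound p n
    have h1 : Λ.d (W N) = p + n + fun i => Λ.d (W N) i - (p i + n i) :=
      Λ.chain_deg hd p n hN
    rw [Λ.ofChain_val W hd hcomp p n hN _ h1]
    obtain ⟨A, D, hs1, hs2, hd1, hd2, hd3, hc⟩ := Λ.seg_spec (W N) p n _ h1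
    set γ := Λ.seg (W N) p n _ h1 with hγ
    have hsA : Λ.s A = Λ.r (Λ.comp γ D) := by rw [hs1, Λ.r_comp γ D hs2]
    have hsWN : Λ.s (W N) = Λ.s D := by
      rw [← hc, Λ.s_comp A _ hsA, Λ.s_comp γ D hs2]
    refine hT.backward_closed (Λ.s γ) (Λ.d_s γ) (Λ.s D) ?_ ⟨D, hs2.symm, rfl⟩
    rw [← hsWN]
    exact (Λ.tailChain hT v₀ hv N).2.1
  · show (Λ.ofChain W hd hcomp).val 0 0 = v₀
    have h0 : ∀ i, (0 : Fin k → ℕ) i + (0 : Fin k → ℕ) i ≤ 0 := by simp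
    have hdeg : Λ.d (W 0) = 0 + 0 + Λ.d (W 0) := by rw [zero_add, zero_add]
    rw [Λ.ofChain_val W hd hcomp 0 0 h0 _ hdeg, Λ.seg_zero (W 0) _ hdeg]
    show Λ.r (Λ.tailChain hT v₀ hv 0).1 = v₀
    exact (Λ.tailChain hT v₀ hv 0).2.2

end KGraph
namespace KGraph

variable {k : ℕ} (Λ : KGraph k)

theorem cycline_push {T : Set Λ.Path} {μ ξ ν : Λ.Path}
    (hμξ : Λ.s μ = Λ.r ξ) (hμν : Λ.s μ = Λ.r ν)
    (hcyc : Λ.IsCyclinePair (Λ.tailPaths T) ξ ν) :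
    Λ.IsCyclinePair (Λ.tailPaths T) (Λ.comp μ ξ) (Λ.comp μ ν) := by
  obtain ⟨hξP, hνP, hsξν, hext⟩ := hcyc
  refine ⟨?_, ?_, ?_, ?_⟩
  · show Λ.s _ ∈ T
    rw [Λ.s_comp _ _ hμξ]; exact hξP
  · show Λ.s _ ∈ T
    rw [Λ.s_comp _ _ hμν]; exact hνP
  · rw [Λ.s_comp _ _ hμξ, Λ.s_comp _ _ hμν]; exact hsξν
  · intro x hx z hz
    obtain ⟨hz1, hz2⟩ := hz
    have hsν : Λ.s ν = x.val 0 0 := by rw [← Λ.s_comp _ _ hμν]; exact hz1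
    have hdec : ∀ m : Fin k → ℕ, z.val 0 (Λ.d μ + m)
        = Λ.comp (z.val 0 (Λ.d μ)) (z.val (Λ.d μ) m) := by
      intro m
      have hcv := z.comp_val 0 (Λ.d μ) m
      rw [zero_add] at hcv
      exact hcv.symm
    have hzsplit : ∀ m : Fin k → ℕ,
        Λ.s (z.val 0 (Λ.d μ)) = Λ.r (z.val (Λ.d μ) m) := by
      intro m
      rw [z.s_val, z.r_val, zero_add]
    have hxr : ∀ n : Fin k → ℕ, Λ.s ν = Λ.r (x.val 0 n) := by
      intro n; rw [x.r_val, ← hsν]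
    have key : ∀ n : Fin k → ℕ, z.val 0 (Λ.d μ) = μ ∧
        z.val (Λ.d μ) (Λ.d ν + n) = Λ.comp ν (x.val 0 n) := by
      intro n
      have h2 := hz2 n
      rw [Λ.d_comp _ _ hμν, add_assoc, hdec (Λ.d ν + n),
        Λ.comp_assoc μ ν _ hμν (hxr n)] at h2
      exact Λ.comp_factor_unique (hzsplit _)
        (by rw [hμν, Λ.r_comp _ _ (hxr n)]) (z.d_val _ _) h2
    have hμeq : z.val 0 (Λ.d μ) = μ := (key 0).1
    have hz₂ : Λ.IsExtension ν x (z.shift (Λ.d μ)) := by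
      refine ⟨hsν, fun n => ?_⟩
      show z.val (0 + Λ.d μ) (Λ.d ν + n) = _
      rw [zero_add]
      exact (key n).2
    have hext₂ := hext x hx (z.shift (Λ.d μ)) hz₂
    refine ⟨by rw [Λ.s_comp _ _ hμξ]; exact hext₂.1, fun n => ?_⟩
    have h3 : z.val (Λ.d μ) (Λ.d ξ + n) = Λ.comp ξ (x.val 0 n) := by
      have h4 := hext₂.2 n
      show z.val (Λ.d μ) (Λ.d ξ + n) = _
      rw [show (z.shift (Λ.d μ)).val 0 (Λ.d ξ + n) = z.val (0 + Λ.d μ) (Λ.d ξ + n) from rfl,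
        zero_add] at h4
      exact h4
    have hsξx : Λ.s ξ = Λ.r (x.val 0 n) := by rw [x.r_val, ← hext₂.1]
    rw [Λ.d_comp _ _ hμξ, add_assoc, hdec (Λ.d ξ + n), hμeq, h3]
    exact (Λ.comp_assoc μ ξ _ hμξ hsξx).symm

theorem cycline_pull {T : Set Λ.Path} {μ ξ ν : Λ.Path}
    (hμξ : Λ.s μ = Λ.r ξ) (hμν : Λ.s μ = Λ.r ν)
    (hcyc : Λ.IsCyclinePair (Λ.tailPaths T) (Λ.comp μ ξ) (Λ.comp μ ν)) :
    Λ.IsCyclinePair (Λ.tailPaths T) ξ ν := by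
  obtain ⟨hP1, hP2, hs, hext⟩ := hcyc
  have hsξ : Λ.s (Λ.comp μ ξ) = Λ.s ξ := Λ.s_comp _ _ hμξ
  have hsν : Λ.s (Λ.comp μ ν) = Λ.s ν := Λ.s_comp _ _ hμν
  have hsξν : Λ.s ξ = Λ.s ν := by rw [← hsξ, ← hsν]; exact hs
  refine ⟨by show Λ.s ξ ∈ T; rw [← hsξ]; exact hP1,
    by show Λ.s ν ∈ T; rw [← hsν]; exact hP2, hsξν, ?_⟩
  intro x hx z₂ hz₂
  obtain ⟨h1, h2⟩ := hz₂
  have hz00 : z₂.val 0 0 = Λ.r ν := by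
    have h20 := h2 0
    rw [show x.val 0 0 = Λ.s ν from h1.symm, Λ.comp_id] at h20
    have hrv := z₂.r_val 0 (Λ.d ν + 0)
    rw [h20] at hrv
    exact hrv.symm
  have hsμz : Λ.s μ = z₂.val 0 0 := by rw [hz00]; exact hμν
  have hpre := Λ.prepend_spec μ z₂ hsμz
  set z' := Λ.prepend μ z₂ hsμz with hz'def
  have hxrν : Λ.s ν = Λ.r (x.val 0 0) := by rw [x.r_val, ← h1]
  have hz' : Λ.IsExtension (Λ.comp μ ν) x z' := by
    refine ⟨by rw [Λ.s_comp _ _ hμν]; exact h1, fun n => ?_⟩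
    rw [Λ.d_comp _ _ hμν, add_assoc, hpre.2 (Λ.d ν + n), h2 n]
    exact (Λ.comp_assoc μ ν _ hμν (by rw [x.r_val, ← h1])).symm
  have hμξext := hext x hx z' hz'
  have hsξx : Λ.s ξ = x.val 0 0 := by rw [← hsξ]; exact hμξext.1
  refine ⟨hsξx, fun n => ?_⟩
  have ha := hμξext.2 n
  rw [Λ.d_comp _ _ hμξ, add_assoc, hpre.2 (Λ.d ξ + n),
    Λ.comp_assoc μ ξ _ hμξ (by rw [x.r_val, ← hsξx])] at ha
  exact (Λ.comp_factor_unique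
    (by rw [z₂.r_val 0 (Λ.d ξ + n), ← hsμz])
    (by rw [Λ.r_comp ξ _ (by rw [x.r_val, ← hsξx])]; exact hμξ)
    rfl ha).2

end KGraph
namespace KGraph

variable {k : ℕ} (Λ : KGraph k)

theorem hset_hereditary {T : Set Λ.Path} (hT : MaximalTail Λ T) (μ : Λ.Path)
    (hr : Λ.r μ ∈ Λ.HSet T) (hsT : Λ.s μ ∈ T) : Λ.s μ ∈ Λ.HSet T := by
  obtain ⟨hvT, hv⟩ := hr
  refine ⟨hsT, ?_⟩
  intro p q hper ξ hrξ hdξ hsξ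
  have hμξ : Λ.s μ = Λ.r ξ := hrξ.symm
  have hper' : (fun i => ((Λ.d μ + p) i : ℤ) - ((Λ.d μ + q) i : ℤ))
      ∈ Λ.PerPair (Λ.tailPaths T) := by
    have heq : (fun i => ((Λ.d μ + p) i : ℤ) - ((Λ.d μ + q) i : ℤ))
        = fun i => (p i : ℤ) - (q i : ℤ) := by
      funext i
      simp only [Pi.add_apply]
      push_cast
      ring
    rw [heq]
    exact hper
  have hEU := hv (Λ.d μ + p) (Λ.d μ + q) hper' (Λ.comp μ ξ)
    (Λ.r_comp _ _ hμξ)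
    (by rw [Λ.d_comp _ _ hμξ, hdξ])
    (by rw [Λ.s_comp _ _ hμξ]; exact hsξ)
  obtain ⟨ν', ⟨hrν', hdν', hcyc'⟩, huniq⟩ := hEU
  obtain ⟨⟨μ₁, ν₁⟩, ⟨hfs, hfd1, hfd2, hfc⟩, -⟩ := Λ.factor ν' (Λ.d μ) q hdν'
  have hsν'T : Λ.s ν' ∈ T := hcyc'.2.1
  obtain ⟨x, hxsub, hx00⟩ := Λ.exists_infPath hT (Λ.s ν') hsν'T
  have hsz : Λ.s ν' = x.val 0 0 := hx00.symm
  have hzext := Λ.prepend_spec ν' x hsz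
  set z := Λ.prepend ν' x hsz with hzdef
  have hμξext := hcyc'.2.2.2 x hxsub z hzext
  have hdμξ : Λ.d (Λ.comp μ ξ) = Λ.d μ + p := by rw [Λ.d_comp _ _ hμξ, hdξ]
  have e1 : z.val 0 (Λ.d μ + p) = Λ.comp μ ξ := by
    have h0 := hμξext.2 0
    rw [hdμξ, show x.val 0 0 = Λ.s (Λ.comp μ ξ) from hμξext.1.symm, Λ.comp_id] at h0
    exact h0
  have e2 : z.val 0 (Λ.d μ + q) = ν' := by
    have h0 := hzext.2 0
    rw [show x.val 0 0 = Λ.s ν' from hzext.1.symm, Λ.comp_id, hdν'] at h0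
    exact h0
  have hdec : ∀ m : Fin k → ℕ, z.val 0 (Λ.d μ + m)
      = Λ.comp (z.val 0 (Λ.d μ)) (z.val (Λ.d μ) m) := by
    intro m
    have hcv := z.comp_val 0 (Λ.d μ) m
    rw [zero_add] at hcv
    exact hcv.symm
  have hzsplit : ∀ m : Fin k → ℕ,
      Λ.s (z.val 0 (Λ.d μ)) = Λ.r (z.val (Λ.d μ) m) := by
    intro m
    rw [z.s_val, z.r_val, zero_add]
  have key1 := Λ.comp_factor_unique (hzsplit p) hμξ (z.d_val 0 (Λ.d μ))
    ((hdec p).symm.trans e1)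
  have key2 := Λ.comp_factor_unique (hzsplit q) hfs
    (by rw [z.d_val, hfd1]) ((hdec q).symm.trans (e2.trans hfc.symm))
  have hμ₁ : μ = μ₁ := key1.1.symm.trans key2.1
  subst hμ₁
  have hcycξ : Λ.IsCyclinePair (Λ.tailPaths T) ξ ν₁ := by
    refine Λ.cycline_pull hμξ hfs ?_
    rw [hfc]
    exact hcyc'
  refine ⟨ν₁, ⟨hfs.symm, hfd2, hcycξ⟩, ?_⟩
  intro ν₂ ⟨hrν₂, hdν₂, hcyc₂⟩
  have mk : ∀ ν₀ : Λ.Path, Λ.r ν₀ = Λ.s μ → Λ.d ν₀ = q →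
      Λ.IsCyclinePair (Λ.tailPaths T) ξ ν₀ →
      Λ.r (Λ.comp μ ν₀) = Λ.r μ ∧ Λ.d (Λ.comp μ ν₀) = Λ.d μ + q ∧
        Λ.IsCyclinePair (Λ.tailPaths T) (Λ.comp μ ξ) (Λ.comp μ ν₀) := by
    intro ν₀ h1 h2 h3
    exact ⟨Λ.r_comp μ ν₀ h1.symm, by rw [Λ.d_comp μ ν₀ h1.symm, h2],
      Λ.cycline_push hμξ h1.symm h3⟩
  have u1 := huniq (Λ.comp μ ν₂)
    (by obtain ⟨a, b, c⟩ := mk ν₂ hrν₂ hdν₂ hcyc₂; exact ⟨a, b, c⟩)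
  have u2 := huniq (Λ.comp μ ν₁)
    (by obtain ⟨a, b, c⟩ := mk ν₁ hfs.symm hfd2 hcycξ; exact ⟨a, b, c⟩)
  exact (Λ.comp_factor_unique hrν₂.symm hfs rfl (u1.trans u2.symm)).2

end KGraph
/-- For a pseudo free self-similar `k`-graph `(G, Λ)` with `g · v = v` for
all vertices `v`, and a maximal tail `T` of `Λ`: `H_T ΛT` is a row-finite
source-free `k`-graph with vertex set `H_T`, the action and restriction map
restrict to it, and `(G, H_T ΛT)` is a pseudo free self-similar `k`-graph. -/
theorem corner_subgraph_selfSimilar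
    {k : ℕ} (G : Type) [Group G] [Countable G] (Λ : KGraph k)
    (hRF : Λ.RowFinite) (hSF : Λ.SourceFree)
    (S : SelfSimilarSys k G Λ) (hPF : S.PseudoFree)
    (hfix : ∀ g v, Λ.IsVertex v → S.act g v = v)
    (T : Set Λ.Path) (hT : MaximalTail Λ T) :
    -- H_T consists of vertices of ΛT
    (∀ v ∈ Λ.HSet T, v ∈ T ∧ Λ.IsVertex v) ∧
    -- H_T ΛT contains ranges and sources of its members; its vertex set is H_T
    (∀ μ ∈ Λ.cornerPaths T (Λ.HSet T),
      Λ.r μ ∈ Λ.HSet T ∧ Λ.s μ ∈ Λ.HSet T) ∧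
    (∀ v, Λ.IsVertex v → (v ∈ Λ.cornerPaths T (Λ.HSet T) ↔ v ∈ Λ.HSet T)) ∧
    -- H_T ΛT is closed under composition and factorization
    (∀ μ ν, Λ.s μ = Λ.r ν → μ ∈ Λ.cornerPaths T (Λ.HSet T) →
      ν ∈ Λ.tailPaths T → Λ.comp μ ν ∈ Λ.cornerPaths T (Λ.HSet T)) ∧
    (∀ μ ∈ Λ.cornerPaths T (Λ.HSet T), ∀ α β, Λ.s α = Λ.r β → Λ.comp α β = μ →
      α ∈ Λ.cornerPaths T (Λ.HSet T) ∧ β ∈ Λ.cornerPaths T (Λ.HSet T)) ∧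
    -- H_T ΛT is row-finite and source-free
    (∀ v ∈ Λ.HSet T, ∀ p : Fin k → ℕ,
      {μ | Λ.r μ = v ∧ Λ.d μ = p ∧ μ ∈ Λ.cornerPaths T (Λ.HSet T)}.Finite) ∧
    (∀ v ∈ Λ.HSet T, ∀ p : Fin k → ℕ,
      ∃ μ ∈ Λ.cornerPaths T (Λ.HSet T), Λ.r μ = v ∧ Λ.d μ = p) ∧
    -- the action of G restricts to H_T ΛT
    (∀ g μ, μ ∈ Λ.cornerPaths T (Λ.HSet T) →
      S.act g μ ∈ Λ.cornerPaths T (Λ.HSet T)) ∧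
    -- (G, H_T ΛT) is pseudo free
    (∀ g, ∀ μ ∈ Λ.cornerPaths T (Λ.HSet T),
      S.act g μ = μ → S.res g μ = 1 → g = 1) := by
  refine ⟨?_, ?_, ?_, ?_, ?_, ?_, ?_, ?_, ?_⟩
  · exact fun v hv => ⟨hv.1, hT.vertex v hv.1⟩
  · exact fun μ hμ => ⟨hμ.2, Λ.hset_hereditary hT μ hμ.2 hμ.1⟩
  · intro v hvert
    constructor
    · rintro ⟨h1, h2⟩
      rwa [Λ.vertex_r hvert] at h2
    · intro h
      exact ⟨by rw [Λ.vertex_s hvert]; exact h.1, by rw [Λ.vertex_r hvert]; exact h⟩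
  · intro μ ν hsr hμ hν
    exact ⟨by show Λ.s _ ∈ T; rw [Λ.s_comp _ _ hsr]; exact hν,
      by show Λ.r _ ∈ Λ.HSet T; rw [Λ.r_comp _ _ hsr]; exact hμ.2⟩
  · intro μ hμ α β hsr hc
    have hsβ : Λ.s β ∈ T := by
      have h1 : Λ.s (Λ.comp α β) = Λ.s β := Λ.s_comp _ _ hsr
      rw [hc] at h1
      rw [← h1]
      exact hμ.1
    have hrα : Λ.r α ∈ Λ.HSet T := by
      have h1 : Λ.r (Λ.comp α β) = Λ.r α := Λ.r_comp _ _ hsr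
      rw [hc] at h1
      rw [← h1]
      exact hμ.2
    have hrβT : Λ.r β ∈ T :=
      hT.backward_closed (Λ.r β) (Λ.d_r β) (Λ.s β) hsβ ⟨β, rfl, rfl⟩
    have hα : α ∈ Λ.cornerPaths T (Λ.HSet T) := ⟨by rw [hsr]; exact hrβT, hrα⟩
    refine ⟨hα, ⟨hsβ, ?_⟩⟩
    have := Λ.hset_hereditary hT α hrα (by rw [hsr]; exact hrβT)
    rwa [hsr] at this
  · intro v hv p
    refine Set.Finite.subset (hRF v (hT.vertex v hv.1) p) ?_
    intro μ hμ
    exact ⟨hμ.1, hμ.2.1⟩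
  · intro v hv p
    obtain ⟨μ, h1, h2, h3⟩ := hT.reaches v hv.1 p
    exact ⟨μ, ⟨h3, by rw [h1]; exact hv⟩, h1, h2⟩
  · intro g μ hμ
    constructor
    · show Λ.s (S.act g μ) ∈ T
      rw [S.s_act, hfix g _ (Λ.d_s μ)]
      exact hμ.1
    · show Λ.r (S.act g μ) ∈ Λ.HSet T
      rw [S.r_act, hfix g _ (Λ.d_r μ)]
      exact hμ.2
  · exact fun g μ _ h1 h2 => hPF g μ h1 h2
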